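/- Let S be a symmetric positive definite real d×d matrix. Then for every symmetric positive definite real d×d matrix M, tr(M S) − log det M ≥ d + log det S, with equality if and only if M = S⁻¹. In particular, the function M ↦ tr(M S) − log det M attains its unique global minimum over the set of symmetric positive definite matrices at M = S⁻¹. -/

import Mathlib

open Matrix

lemma core {d : ℕ} {A : Matrix (Fin d) (Fin d) ℝ} (hA : A.PosDef) :
    (d : ℝ) ≤ A.trace - Real.log A.det ∧ (A.trace - Real.log A.det = d ↔ A = 1) := by
  set μ := hA.1.eigenvalues with hμ
  have hpos : ∀ i, 0 < μ i := fun i => hA.eigenvalues_pos i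
  have htr : A.trace = ∑ i, μ i := by
    conv_lhs => rw [hA.1.spectral_theorem, Unitary.conjStarAlgAut_apply]
    rw [Matrix.trace_mul_cycle, Unitary.star_mul_self_of_mem hA.1.eigenvectorUnitary.2, one_mul, Matrix.trace_diagonal]
    simp [Function.comp, hμ]
  have hdet : A.det = ∏ i, μ i := by
    simpa using hA.1.det_eq_prod_eigenvalues
  have hlog : Real.log A.det = ∑ i, Real.log (μ i) := by
    rw [hdet, Real.log_prod (fun i _ => (hpos i).ne')]
  have hkey : A.trace - Real.log A.det = ∑ i, (μ i - Real.log (μ i)) := by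
    rw [htr, hlog, Finset.sum_sub_distrib]
  have hterm : ∀ i, (1 : ℝ) ≤ μ i - Real.log (μ i) := fun i => by
    have := Real.log_le_sub_one_of_pos (hpos i); linarith
  have hsum : (d : ℝ) ≤ A.trace - Real.log A.det := by
    rw [hkey]
    calc (d : ℝ) = ∑ _i : Fin d, (1 : ℝ) := by simp
    _ ≤ _ := Finset.sum_le_sum fun i _ => hterm i
  refine ⟨hsum, ?_, ?_⟩
  · intro heq
    have hall : ∀ i, μ i = 1 := by
      by_contra hc
      push_neg at hc
      obtain ⟨j, hj⟩ := hc
      have hstrict : (1 : ℝ) < μ j - Real.log (μ j) := by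
        have := Real.log_lt_sub_one_of_pos (hpos j) hj; linarith
      have : (d : ℝ) < ∑ i, (μ i - Real.log (μ i)) := by
        calc (d : ℝ) = ∑ _i : Fin d, (1 : ℝ) := by simp
        _ < _ := Finset.sum_lt_sum (fun i _ => hterm i) ⟨j, Finset.mem_univ j, hstrict⟩
      rw [hkey] at heq
      linarith
    conv_lhs => rw [hA.1.spectral_theorem, Unitary.conjStarAlgAut_apply]
    have h2 : Matrix.diagonal (RCLike.ofReal ∘ μ) = (1 : Matrix (Fin d) (Fin d) ℝ) := by
      have : μ = fun _ => 1 := funext hall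
      simp [this, Function.comp]
    rw [h2, mul_one, Matrix.mem_unitaryGroup_iff.mp hA.1.eigenvectorUnitary.2]
  · rintro rfl
    simp

lemma congr_posDef {d : ℕ} {M R : Matrix (Fin d) (Fin d) ℝ} (hM : M.PosDef)
    (hR : R.IsHermitian) (hdet : R.det ≠ 0) : (R * M * R).PosDef := by
  refine Matrix.PosDef.of_dotProduct_mulVec_pos ?_ ?_
  · have := Matrix.isHermitian_conjTranspose_mul_mul R hM.1
    rwa [hR.eq] at this
  · intro x hx
    have hy : R *ᵥ x ≠ 0 := by
      intro h
      apply hx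
      have := Matrix.eq_zero_of_mulVec_eq_zero hdet h
      exact this
    have : star x ⬝ᵥ ((R * M * R) *ᵥ x) = star (R *ᵥ x) ⬝ᵥ (M *ᵥ (R *ᵥ x)) := by
      rw [← Matrix.mulVec_mulVec, ← Matrix.mulVec_mulVec]
      rw [Matrix.dotProduct_mulVec, ← Matrix.mulVec_transpose]
      have : Rᵀ = R := hR
      rw [this]
      simp
    rw [this]
    exact hM.dotProduct_mulVec_pos hy

open scoped MatrixOrder in
lemma sqrt_facts {d : ℕ} {S : Matrix (Fin d) (Fin d) ℝ} (hS : S.PosDef) :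
    ∃ R : Matrix (Fin d) (Fin d) ℝ, R.PosSemidef ∧ R * R = S :=
  ⟨CFC.sqrt S, (CFC.sqrt_nonneg S).posSemidef, CFC.sqrt_mul_sqrt_self S hS.posSemidef.nonneg⟩

/-- For symmetric positive definite `S` and every symmetric positive definite `M`:
`tr (M S) − log det M ≥ d + log det S`, with equality iff `M = S⁻¹`; i.e. the map
`M ↦ tr (M S) − log det M` attains its unique global minimum over positive definite matrices
at `M = S⁻¹`. -/
theorem trace_sub_log_det_minimized_at_inv {d : ℕ}
    (S : Matrix (Fin d) (Fin d) ℝ) (hS : S.PosDef) :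
    ∀ M : Matrix (Fin d) (Fin d) ℝ, M.PosDef →
      ((d : ℝ) + Real.log S.det ≤ (M * S).trace - Real.log M.det ∧
        ((M * S).trace - Real.log M.det = (d : ℝ) + Real.log S.det ↔ M = S⁻¹)) := by
  intro M hM
  obtain ⟨R, hRps, hRR⟩ := sqrt_facts hS
  have hRH : R.IsHermitian := hRps.1
  have hSdet : 0 < S.det := hS.det_pos
  have hMdet : 0 < M.det := hM.det_pos
  have hRdet0 : R.det ≠ 0 := by
    intro h
    have : S.det = R.det * R.det := by rw [← hRR, Matrix.det_mul]
    rw [h, mul_zero] at this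
    exact hSdet.ne' this
  have hRdet : IsUnit R.det := isUnit_iff_ne_zero.mpr hRdet0
  have hA : (R * M * R).PosDef := congr_posDef hM hRH hRdet0
  have htr : (R * M * R).trace = (M * S).trace := by
    rw [Matrix.trace_mul_comm, ← mul_assoc, hRR, Matrix.trace_mul_comm]
  have hdet : (R * M * R).det = M.det * S.det := by
    rw [Matrix.det_mul, Matrix.det_mul, ← hRR, Matrix.det_mul]; ring
  have hlogdet : Real.log (R * M * R).det = Real.log M.det + Real.log S.det := by
    rw [hdet, Real.log_mul hMdet.ne' hSdet.ne']
  have hrw : (R * M * R).trace - Real.log (R * M * R).det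
      = (M * S).trace - Real.log M.det - Real.log S.det := by
    rw [htr, hlogdet]; ring
  obtain ⟨hle, hiff⟩ := core hA
  have hiff2 : R * M * R = 1 ↔ M = S⁻¹ := by
    constructor
    · intro h
      have : M = R⁻¹ * (R * M * R) * R⁻¹ := by
        rw [← mul_assoc, ← mul_assoc, Matrix.nonsing_inv_mul R hRdet, one_mul, mul_assoc,
          Matrix.mul_nonsing_inv R hRdet, mul_one]
      rw [this, h, mul_one, ← Matrix.mul_inv_rev, hRR]
    · rintro rfl
      rw [← hRR, Matrix.mul_inv_rev, ← mul_assoc R R⁻¹ R⁻¹,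
        Matrix.mul_nonsing_inv R hRdet, one_mul, Matrix.nonsing_inv_mul R hRdet]
  constructor
  · rw [hrw] at hle; linarith
  · rw [hrw] at hiff
    rw [← hiff2, ← hiff]
    constructor <;> intro h <;> linarith
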